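/- Let P_S and P_T be domains on X × Y with Y = {−1,1}, D_T the marginal of P_T on X, and let A ⊆ X × Y be a measurable set with P_S(Aᶜ) = 0 such that the restriction of P_T to A is absolutely continuous with respect to P_S with density ρ; let β_∞ be the P_S-essential supremum of ρ and η_{T∖S} = P_T(Aᶜ)·sup_{h∈H} R_{T∖S}(h) (zero when P_T(Aᶜ)=0), where T∖S is the conditional of P_T given Aᶜ. Let π be a prior on H, b > 0, c > 0, δ ∈ (0,1], and set b' = (b/(1−e^{−b}))·β_∞ and c' = c/(1−e^{−c}). Then with probability at least 1 − δ over the draw of S ∼ (P_S)^{m_s} and T ∼ (D_T)^{m_t} (independent), simultaneously for all posteriors Q on H: R_{P_T}(G_Q) ≤ c'·(1/2)·d̂_T(Q) + b'·ê_S(Q) + η_{T∖S} + ( c'/(m_t·c) + b'/(m_s·b) ) · ( 2·KL(Q‖π) + ln(2/δ) ), where d̂_T(Q) and ê_S(Q) are the empirical expected disagreement on T and the empirical expected joint error on S. -/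

import Mathlib

/-!
STATEMENT 5: PAC-Bayesian domain adaptation generalization bound
(Theorem 6 of the paper, case `q → ∞`).  `Y = {-1,1}` is encoded as `Bool`.
`β_∞ = essSup ρ P_S` may be infinite, and the KL divergence is `ℝ≥0∞`-valued,
so the whole inequality is stated in `ℝ≥0∞` (vacuous in the degenerate cases).
-/

set_option maxHeartbeats 1000000
set_option linter.unusedSectionVars false
set_option linter.unusedVariables false

open MeasureTheory ProbabilityTheory Real
open scoped ENNReal Classical

noncomputable section

/-- Kullback–Leibler divergence, `∞` in the degenerate cases. -/
def klDivergence {Ω : Type*} [MeasurableSpace Ω] (Q pr : Measure Ω) : ℝ≥0∞ :=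
  if Q ≪ pr ∧ Integrable (llr Q pr) Q then ENNReal.ofReal (∫ h, llr Q pr h ∂Q) else ∞

namespace PBDA

def ind (q : Prop) : ℝ := if q then 1 else 0

lemma ind_nonneg (q : Prop) : 0 ≤ ind q := by unfold ind; split <;> norm_num
lemma ind_le_one (q : Prop) : ind q ≤ 1 := by unfold ind; split <;> norm_num
lemma abs_ind_le_one (q : Prop) : |ind q| ≤ 1 := by
  rw [abs_le]; exact ⟨by linarith [ind_nonneg q], ind_le_one q⟩

lemma ind_eq {q : Prop} [Decidable q] : (if q then (1:ℝ) else 0) = ind q := by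
  unfold ind; by_cases h : q <;> simp [h]

lemma measurable_ind {α : Type*} [MeasurableSpace α] {P : α → Prop}
    (hP : MeasurableSet {x | P x}) : Measurable fun x => ind (P x) := by
  unfold ind
  exact Measurable.ite hP measurable_const measurable_const

lemma integrable_of_bdd {α : Type*} [MeasurableSpace α] {μ : Measure α} [IsFiniteMeasure μ]
    {f : α → ℝ} (hf : AEStronglyMeasurable f μ) {C : ℝ} (h : ∀ x, |f x| ≤ C) :
    Integrable f μ :=
  (integrable_const C).mono' hf (ae_of_all _ fun x => by simpa using h x)

lemma measurableSet_ne_bool {α : Type*} [MeasurableSpace α] {f g : α → Bool}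
    (hf : Measurable f) (hg : Measurable g) : MeasurableSet {x | f x ≠ g x} := by
  have : {x | f x ≠ g x} = (fun x => (f x, g x)) ⁻¹' {p : Bool × Bool | p.1 ≠ p.2} := rfl
  rw [this]
  exact (hf.prodMk hg) ((Set.toFinite _).measurableSet)

section Core

variable {Z W : Type*} [MeasurableSpace Z] [MeasurableSpace W]
  (D : Measure Z) [IsProbabilityMeasure D] (π' : Measure W) [IsProbabilityMeasure π']
  (p : W → Z → Prop) (c : ℝ) (m : ℕ)

/-- true loss -/
def L (w : W) : ℝ := ∫ z, ind (p w z) ∂D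

/-- the exponent function -/
def F (s : Fin m → Z) (w : W) : ℝ :=
  ∑ i, ((1 - Real.exp (-c)) * L D p w - c * ind (p w (s i)))

variable (hp : MeasurableSet {q : W × Z | p q.1 q.2})

lemma L_nonneg (w : W) : 0 ≤ L D p w := integral_nonneg fun z => ind_nonneg _

include hp in
lemma L_le_one (w : W) : L D p w ≤ 1 := by
  calc L D p w ≤ ∫ _z, (1:ℝ) ∂D := by
        apply integral_mono _ (integrable_const 1) (fun z => ind_le_one _)
        exact integrable_of_bdd ((measurable_ind
          (measurable_prodMk_left (m := inferInstance) hp)).aestronglyMeasurable)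
          (fun z => abs_ind_le_one _)
    _ = 1 := by simp

include hp in
lemma measurable_L : Measurable (L D p) := by
  have : StronglyMeasurable fun q : W × Z => ind (p q.1 q.2) :=
    (measurable_ind hp).stronglyMeasurable
  exact this.integral_prod_right'.measurable

include hp in
lemma measurable_ind_curry (w : W) : Measurable fun z => ind (p w z) :=
  measurable_ind (measurable_prodMk_left (m := inferInstance) hp)

include hp in
lemma measurable_F (s : Fin m → Z) : Measurable (F D p c m s) := by
  apply Finset.measurable_sum
  intro i _
  exact (measurable_const.mul (measurable_L D p hp)).sub
    (measurable_const.mul (measurable_ind (measurable_prodMk_right (m := inferInstance) hp)))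

include hp in
lemma measurable_expF : Measurable fun q : W × (Fin m → Z) =>
    ENNReal.ofReal (Real.exp (F D p c m q.2 q.1)) := by
  apply ENNReal.measurable_ofReal.comp
  apply Real.measurable_exp.comp
  unfold F
  apply Finset.measurable_sum
  intro i _
  apply Measurable.sub
  · exact measurable_const.mul ((measurable_L D p hp).comp measurable_fst)
  · apply measurable_const.mul
    exact (measurable_ind hp).comp ((measurable_fst).prodMk
      ((measurable_pi_apply i).comp measurable_snd))

include hp in
lemma measurable_momf : Measurable fun s : Fin m → Z =>
    ∫⁻ w, ENNReal.ofReal (Real.exp (F D p c m s w)) ∂π' := by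
  exact Measurable.lintegral_prod_left' (measurable_expF D p c m hp)

/-- the bad event -/
def badSet (δ' : ℝ) : Set (Fin m → Z) :=
  {s | ENNReal.ofReal (1/δ') < ∫⁻ w, ENNReal.ofReal (Real.exp (F D p c m s w)) ∂π'}

include hp in
lemma measurableSet_badSet (δ' : ℝ) : MeasurableSet (badSet D π' p c m δ') :=
  measurableSet_lt measurable_const (measurable_momf D π' p c m hp)

include hp in
lemma integral_exp_le (hc : 0 < c) (w : W) :
    ∫ z, Real.exp ((1 - Real.exp (-c)) * L D p w - c * ind (p w z)) ∂D ≤ 1 := by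
  set lam := 1 - Real.exp (-c) with hlam
  have hlam0 : 0 < lam := by
    have : Real.exp (-c) < 1 := Real.exp_lt_one_iff.mpr (by linarith)
    simp [hlam]; linarith
  have hL0 := L_nonneg D p w
  have key : ∀ z, Real.exp (lam * L D p w - c * ind (p w z))
      = Real.exp (lam * L D p w) * (1 - lam * ind (p w z)) := by
    intro z
    unfold ind
    split
    · rw [mul_one, show lam * L D p w - c = lam * L D p w + (-c) by ring, Real.exp_add]
      rw [show (1:ℝ) - lam * 1 = Real.exp (-c) by rw [hlam]; ring]
    · simp
  calc ∫ z, Real.exp (lam * L D p w - c * ind (p w z)) ∂D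
      = ∫ z, Real.exp (lam * L D p w) * (1 - lam * ind (p w z)) ∂D := by
        exact integral_congr_ae (ae_of_all _ key)
    _ = Real.exp (lam * L D p w) * (1 - lam * L D p w) := by
        rw [integral_const_mul]
        congr 1
        rw [integral_sub (integrable_const 1)]
        · simp [integral_const_mul, L]
        · exact (integrable_of_bdd (measurable_ind_curry (p := p) hp w).aestronglyMeasurable
            (fun z => abs_ind_le_one _)).const_mul lam
    _ ≤ Real.exp (lam * L D p w) * Real.exp (-(lam * L D p w)) := by
        apply mul_le_mul_of_nonneg_left _ (Real.exp_nonneg _)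
        linarith [Real.add_one_le_exp (-(lam * L D p w))]
    _ = 1 := by rw [← Real.exp_add]; simp

include hp in
lemma moment_markov (hc : 0 < c) {δ' : ℝ} (hδ' : 0 < δ') :
    (Measure.pi fun _ : Fin m => D) (badSet D π' p c m δ') ≤ ENNReal.ofReal δ' := by
  set lam := 1 - Real.exp (-c) with hlam
  -- bound the double lintegral by 1
  have hkey : ∫⁻ s, (∫⁻ w, ENNReal.ofReal (Real.exp (F D p c m s w)) ∂π')
      ∂(Measure.pi fun _ : Fin m => D) ≤ 1 := by
    have hswap : ∫⁻ s, (∫⁻ w, ENNReal.ofReal (Real.exp (F D p c m s w)) ∂π')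
        ∂(Measure.pi fun _ : Fin m => D)
        = ∫⁻ w, (∫⁻ s, ENNReal.ofReal (Real.exp (F D p c m s w))
            ∂(Measure.pi fun _ : Fin m => D)) ∂π' := by
      apply lintegral_lintegral_swap
      exact ((measurable_expF D p c m hp).comp measurable_swap).aemeasurable
    rw [hswap]
    calc ∫⁻ w, (∫⁻ s, ENNReal.ofReal (Real.exp (F D p c m s w))
            ∂(Measure.pi fun _ : Fin m => D)) ∂π'
        ≤ ∫⁻ _w, 1 ∂π' := by
          apply lintegral_mono
          intro w
          -- inner pi-integral ≤ 1
          letI : MeasureSpace Z := ⟨D⟩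
          haveI : IsProbabilityMeasure (volume : Measure Z) := ‹IsProbabilityMeasure D›
          have hvol : (Measure.pi fun _ : Fin m => D) = (volume : Measure (Fin m → Z)) := rfl
          have hlam0 : 0 < lam := by
            have : Real.exp (-c) < 1 := Real.exp_lt_one_iff.mpr (by linarith)
            simp only [hlam]; linarith
          have hlam1 : lam ≤ 1 := by
            have := Real.exp_pos (-c); simp only [hlam]; linarith
          have hfsmeas : Measurable fun s : Fin m → Z => F D p c m s w := by
            unfold F
            apply Finset.measurable_sum
            intro i _
            apply Measurable.sub measurable_const
            apply measurable_const.mul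
            exact (measurable_ind (measurable_prodMk_left (m := inferInstance) hp)).comp
              (measurable_pi_apply i)
          have hFint : Integrable (fun s : Fin m → Z => Real.exp (F D p c m s w))
              (Measure.pi fun _ : Fin m => D) := by
            apply integrable_of_bdd (Real.measurable_exp.comp hfsmeas).aestronglyMeasurable
              (C := Real.exp m)
            intro s
            simp only [Function.comp_apply]
            rw [abs_of_nonneg (Real.exp_nonneg _)]
            apply Real.exp_le_exp.mpr
            unfold F
            calc ∑ i : Fin m, (lam * L D p w - c * ind (p w (s i)))
                ≤ ∑ _i : Fin m, (1:ℝ) := by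
                  apply Finset.sum_le_sum
                  intro i _
                  have h1 : lam * L D p w ≤ 1 :=
                    mul_le_one₀ hlam1 (L_nonneg D p w) (L_le_one D p hp w)
                  have h2 : 0 ≤ c * ind (p w (s i)) :=
                    mul_nonneg hc.le (ind_nonneg _)
                  linarith
              _ = m := by simp
          show (∫⁻ s, ENNReal.ofReal (Real.exp (F D p c m s w))
              ∂(Measure.pi fun _ : Fin m => D)) ≤ 1
          rw [← ofReal_integral_eq_lintegral_ofReal hFint
            (ae_of_all _ fun s => Real.exp_nonneg _)]
          have h2 : ∫ s, Real.exp (F D p c m s w) ∂(Measure.pi fun _ : Fin m => D)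
              = ∏ _i : Fin m, ∫ z, Real.exp (lam * L D p w - c * ind (p w z)) ∂D := by
            rw [hvol]
            have h3 := MeasureTheory.integral_fintype_prod_eq_prod (𝕜 := ℝ) (ι := Fin m) (μ := fun _ => D)
              (f := fun (_i : Fin m) (z : Z) => Real.exp (lam * L D p w - c * ind (p w z)))
            have h4 : ∫ s : Fin m → Z, Real.exp (F D p c m s w)
                = ∫ s : Fin m → Z, ∏ i : Fin m,
                    Real.exp (lam * L D p w - c * ind (p w (s i))) := by
              congr 1
              funext s
              show Real.exp (∑ i : Fin m, (lam * L D p w - c * ind (p w (s i)))) = _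
              exact Real.exp_sum _ _
            exact h4.trans (h3.trans (by rfl))
          rw [h2]
          have hfac : ∀ _i : Fin m,
              0 ≤ ∫ z, Real.exp (lam * L D p w - c * ind (p w z)) ∂D :=
            fun _ => integral_nonneg fun z => Real.exp_nonneg _
          calc ENNReal.ofReal (∏ _i : Fin m, ∫ z,
                Real.exp (lam * L D p w - c * ind (p w z)) ∂D)
              ≤ ENNReal.ofReal 1 := by
                apply ENNReal.ofReal_le_ofReal
                apply Finset.prod_le_one (fun i _ => hfac i)
                intro i _
                exact integral_exp_le D p c hp hc w
            _ = 1 := by simp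
        _ = 1 := by simp
  -- Markov
  set momf := fun s : Fin m → Z => ∫⁻ w, ENNReal.ofReal (Real.exp (F D p c m s w)) ∂π'
    with hmomf
  have hmark := mul_meas_ge_le_lintegral₀
    (μ := Measure.pi fun _ : Fin m => D)
    (measurable_momf D π' p c m hp).aemeasurable (ENNReal.ofReal (1/δ'))
  have hε0 : ENNReal.ofReal (1/δ') ≠ 0 := by
    simp only [ne_eq, ENNReal.ofReal_eq_zero, not_le]
    positivity
  have hsub : (Measure.pi fun _ : Fin m => D) (badSet D π' p c m δ')
      ≤ (Measure.pi fun _ : Fin m => D) {s | ENNReal.ofReal (1/δ') ≤ momf s} :=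
    measure_mono fun s hs =>
      le_of_lt (show ENNReal.ofReal (1/δ') < momf s from hs)
  have hfin : (Measure.pi fun _ : Fin m => D) {s | ENNReal.ofReal (1/δ') ≤ momf s}
      ≤ 1 / ENNReal.ofReal (1/δ') := by
    rw [ENNReal.le_div_iff_mul_le (Or.inl hε0) (Or.inl ENNReal.ofReal_ne_top)]
    rw [mul_comm]
    exact le_trans hmark hkey
  have heq : 1 / ENNReal.ofReal (1/δ') = ENNReal.ofReal δ' := by
    rw [one_div, one_div, ENNReal.ofReal_inv_of_pos hδ', inv_inv]
  exact le_trans hsub (heq ▸ hfin)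

end Core

lemma ofReal_max_zero (x : ℝ) : ENNReal.ofReal (max x 0) = ENNReal.ofReal x := by
  rcases le_total x 0 with h | h
  · simp [max_eq_right h, ENNReal.ofReal_eq_zero.2 h]
  · simp [max_eq_left h]

/-- helper ENNReal inequality -/
lemma mul_div_mul_le (a k r : ℝ≥0∞) (hk : k ≠ 0) (hktop : k ≠ ∞) :
    r * (a / (r * k)) ≤ a / k := by
  rcases eq_or_ne r 0 with h | hr0
  · simp [h]
  rcases eq_or_ne r ∞ with h | hrtop
  · subst h
    rcases eq_or_ne a 0 with ha | ha
    · simp [ha]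
    · rw [ENNReal.top_mul hk, ENNReal.div_top, mul_zero]
      exact zero_le
  · refine le_of_eq ?_
    rw [ENNReal.div_eq_inv_mul, ENNReal.mul_inv (Or.inl hr0) (Or.inl hrtop),
      ENNReal.div_eq_inv_mul]
    calc r * (r⁻¹ * k⁻¹ * a) = (r * r⁻¹) * (k⁻¹ * a) := by ring
      _ = k⁻¹ * a := by rw [ENNReal.mul_inv_cancel hr0 hrtop, one_mul]

/-- Donsker–Varadhan style bound. -/
lemma dv {W : Type*} [MeasurableSpace W] {π' Q' : Measure W}
    [IsProbabilityMeasure π'] [IsProbabilityMeasure Q'] (hac : Q' ≪ π')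
    (hint : Integrable (llr Q' π') Q') {f : W → ℝ} (hf : Measurable f)
    {B : ℝ} (hB : ∀ w, |f w| ≤ B) {K : ℝ} (hK : 0 < K)
    (hmom : ∫⁻ w, ENNReal.ofReal (Real.exp (f w)) ∂π' ≤ ENNReal.ofReal K) :
    ∫ w, f w ∂Q' ≤ ∫ w, llr Q' π' w ∂Q' + Real.log K := by
  set r := Q'.rnDeriv π' with hr
  have hrmeas : Measurable r := Measure.measurable_rnDeriv _ _
  have hpos : ∀ᵐ w ∂Q', 0 < r w := Measure.rnDeriv_pos hac
  have hfin : ∀ᵐ w ∂Q', r w < ∞ := hac.ae_le (Measure.rnDeriv_lt_top Q' π')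
  set g := fun w => f w - llr Q' π' w - Real.log K with hg
  have hfint : Integrable f Q' := integrable_of_bdd hf.aestronglyMeasurable hB
  have hgint : Integrable g Q' := (hfint.sub hint).sub (integrable_const _)
  set u := fun w => ENNReal.ofReal (Real.exp (f w)) / (r w * ENNReal.ofReal K) with hu
  have humeas : Measurable u :=
    (ENNReal.measurable_ofReal.comp (Real.measurable_exp.comp hf)).div
      (hrmeas.mul measurable_const)
  -- a.e. pointwise bound
  have haeb : ∀ᵐ w ∂Q', ENNReal.ofReal (g w + 1) ≤ u w := by
    filter_upwards [hpos, hfin] with w h0 htop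
    have hrt0 : 0 < (r w).toReal := ENNReal.toReal_pos h0.ne' htop.ne
    have ht : (0:ℝ) < Real.exp (f w) / ((r w).toReal * K) := by positivity
    have hlog : g w = Real.log (Real.exp (f w) / ((r w).toReal * K)) := by
      rw [Real.log_div (Real.exp_ne_zero _) (by positivity),
        Real.log_mul hrt0.ne' hK.ne', Real.log_exp]
      simp only [hg, llr, hr]
      ring
    have hle : g w + 1 ≤ Real.exp (f w) / ((r w).toReal * K) := by
      rw [hlog]
      linarith [Real.log_le_sub_one_of_pos ht]
    have huw : u w = ENNReal.ofReal (Real.exp (f w) / ((r w).toReal * K)) := by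
      have hKr : ENNReal.ofReal ((r w).toReal * K) = r w * ENNReal.ofReal K := by
        rw [ENNReal.ofReal_mul ENNReal.toReal_nonneg, ENNReal.ofReal_toReal htop.ne]
      show ENNReal.ofReal (Real.exp (f w)) / (r w * ENNReal.ofReal K) = _
      rw [ENNReal.ofReal_div_of_pos (by positivity), hKr]
    rw [huw]
    exact ENNReal.ofReal_le_ofReal hle
  -- lintegral of u bounded by 1
  have hulint : ∫⁻ w, u w ∂Q' ≤ 1 := by
    have hQ' : π'.withDensity r = Q' := Measure.withDensity_rnDeriv_eq _ _ hac
    rw [← hQ', lintegral_withDensity_eq_lintegral_mul _ hrmeas humeas]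
    have hptw : ∀ w, (r * u) w ≤ ENNReal.ofReal (Real.exp (f w)) / ENNReal.ofReal K := by
      intro w
      exact mul_div_mul_le _ _ _ (by simp [ENNReal.ofReal_eq_zero, not_le, hK])
        ENNReal.ofReal_ne_top
    calc ∫⁻ w, (r * u) w ∂π' ≤ ∫⁻ w, ENNReal.ofReal (Real.exp (f w)) / ENNReal.ofReal K ∂π' :=
          lintegral_mono hptw
      _ = (∫⁻ w, ENNReal.ofReal (Real.exp (f w)) ∂π') / ENNReal.ofReal K := by
          simp_rw [div_eq_mul_inv]
          exact lintegral_mul_const _ (show Measurable fun w => ENNReal.ofReal (Real.exp (f w))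
            from ENNReal.measurable_ofReal.comp (Real.measurable_exp.comp hf))
      _ ≤ ENNReal.ofReal K / ENNReal.ofReal K := by
          exact ENNReal.div_le_div_right hmom _
      _ ≤ 1 := ENNReal.div_self_le_one
  -- combine
  have hgle : ∫ w, g w ∂Q' + 1 ≤ 1 := by
    have h1 : ∫ w, g w ∂Q' + 1 = ∫ w, (g w + 1) ∂Q' := by
      rw [integral_add hgint (integrable_const 1), integral_const]
      simp
    rw [h1]
    have h2 : ∫ w, (g w + 1) ∂Q' ≤ ∫ w, max (g w + 1) 0 ∂Q' := by
      apply integral_mono (hgint.add (integrable_const 1))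
        ((hgint.add (integrable_const 1)).pos_part)
      intro w
      exact le_max_left _ _
    have hmint : Integrable (fun w => max (g w + 1) 0) Q' :=
      (hgint.add (integrable_const 1)).pos_part
    have h3 : ∫ w, max (g w + 1) 0 ∂Q' = (∫⁻ w, ENNReal.ofReal (g w + 1) ∂Q').toReal := by
      have h3' := integral_eq_lintegral_of_nonneg_ae (μ := Q')
        (f := fun w => max (g w + 1) 0)
        (ae_of_all _ fun w => le_max_right _ _) hmint.aestronglyMeasurable
      rw [h3']
      congr 1
      apply lintegral_congr_ae
      exact ae_of_all _ fun w => ofReal_max_zero _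
    have h4 : (∫⁻ w, ENNReal.ofReal (g w + 1) ∂Q').toReal ≤ 1 := by
      have h5 : ∫⁻ w, ENNReal.ofReal (g w + 1) ∂Q' ≤ 1 :=
        le_trans (lintegral_mono_ae haeb) hulint
      calc (∫⁻ w, ENNReal.ofReal (g w + 1) ∂Q').toReal ≤ (1 : ℝ≥0∞).toReal :=
            ENNReal.toReal_mono ENNReal.one_ne_top h5
        _ = 1 := by simp
    linarith [le_trans h2 (h3.le.trans h4)]
  have : ∫ w, g w ∂Q' = ∫ w, f w ∂Q' - ∫ w, llr Q' π' w ∂Q' - Real.log K := by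
    have e1 : ∫ w, g w ∂Q' = ∫ w, ((f w - llr Q' π' w) - Real.log K) ∂Q' := rfl
    rw [e1, integral_sub (f := fun w => f w - llr Q' π' w) (g := fun _ => Real.log K)
      (by exact hfint.sub hint) (integrable_const _), integral_sub hfint hint,
      integral_const]
    simp
  linarith [hgle, this.symm.le]

lemma integral_llr_nonneg {W : Type*} [MeasurableSpace W] {Q pr : Measure W}
    [IsProbabilityMeasure Q] [IsProbabilityMeasure pr] (hac : Q ≪ pr)
    (hint : Integrable (llr Q pr) Q) : 0 ≤ ∫ w, llr Q pr w ∂Q := by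
  have := dv hac hint (f := fun _ => 0) measurable_const (B := 0) (fun w => by simp)
    (K := 1) one_pos (by simp)
  simpa using this

section Det

variable {Z W : Type*} [MeasurableSpace Z] [MeasurableSpace W]
  (D : Measure Z) [IsProbabilityMeasure D] (π' : Measure W) [IsProbabilityMeasure π']
  (p : W → Z → Prop) (c : ℝ) (m : ℕ)
  (hp : MeasurableSet {q : W × Z | p q.1 q.2})

include hp in
lemma det_core (hc : 0 < c) {δ' : ℝ} (hδ' : 0 < δ') (s : Fin m → Z)
    (hs : (∫⁻ w, ENNReal.ofReal (Real.exp (F D p c m s w)) ∂π') ≤ ENNReal.ofReal (1/δ'))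
    (Q' : Measure W) [IsProbabilityMeasure Q'] (hac : Q' ≪ π')
    (hint : Integrable (llr Q' π') Q') :
    (1 - Real.exp (-c)) * ((m : ℝ) * ∫ w, L D p w ∂Q')
      ≤ c * ∑ i : Fin m, ∫ w, ind (p w (s i)) ∂Q'
        + (∫ w, llr Q' π' w ∂Q' + Real.log (1/δ')) := by
  set lam := 1 - Real.exp (-c) with hlam
  have hlam0 : 0 < lam := by
    have : Real.exp (-c) < 1 := Real.exp_lt_one_iff.mpr (by linarith)
    simp only [hlam]; linarith
  have hlam1 : lam ≤ 1 := by
    have := Real.exp_pos (-c); simp only [hlam]; linarith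
  have hFmeas : Measurable (F D p c m s) := measurable_F D p c m hp s
  have hB : ∀ w, |F D p c m s w| ≤ m * (1 + c) := by
    intro w
    calc |F D p c m s w| ≤ ∑ i : Fin m, |lam * L D p w - c * ind (p w (s i))| :=
          Finset.abs_sum_le_sum_abs _ _
      _ ≤ ∑ _i : Fin m, (1 + c) := by
          apply Finset.sum_le_sum
          intro i _
          calc |lam * L D p w - c * ind (p w (s i))|
              ≤ |lam * L D p w| + |c * ind (p w (s i))| := abs_sub _ _
            _ ≤ 1 + c := by
                apply add_le_add
                · rw [abs_of_nonneg (mul_nonneg hlam0.le (L_nonneg D p w))]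
                  exact mul_le_one₀ hlam1 (L_nonneg D p w) (L_le_one D p hp w)
                · rw [abs_of_nonneg (mul_nonneg hc.le (ind_nonneg _))]
                  calc c * ind (p w (s i)) ≤ c * 1 :=
                        mul_le_mul_of_nonneg_left (ind_le_one _) hc.le
                    _ = c := mul_one c
      _ = m * (1 + c) := by rw [Finset.sum_const]; simp; ring
  have hdv := dv hac hint hFmeas hB (K := 1/δ') (by positivity) hs
  -- compute ∫ F dQ'
  have hLint : Integrable (L D p) Q' :=
    integrable_of_bdd (measurable_L D p hp).aestronglyMeasurable
      (fun w => by rw [abs_of_nonneg (L_nonneg D p w)]; exact L_le_one D p hp w)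
  have hiint : ∀ z : Z, Integrable (fun w => ind (p w z)) Q' := fun z =>
    integrable_of_bdd (measurable_ind
      (measurable_prodMk_right (m := inferInstance) hp)).aestronglyMeasurable
      (fun w => abs_ind_le_one _)
  have hFval : ∫ w, F D p c m s w ∂Q'
      = lam * ((m : ℝ) * ∫ w, L D p w ∂Q') - c * ∑ i : Fin m, ∫ w, ind (p w (s i)) ∂Q' := by
    have e1 : ∫ w, F D p c m s w ∂Q'
        = ∑ i : Fin m, ∫ w, (lam * L D p w - c * ind (p w (s i))) ∂Q' := by
      rw [show (fun w => F D p c m s w) = fun w => ∑ i : Fin m,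
        (lam * L D p w - c * ind (p w (s i))) from rfl]
      exact integral_finset_sum _ fun i _ =>
        ((hLint.const_mul lam).sub ((hiint (s i)).const_mul c))
    rw [e1]
    have e2 : ∀ i : Fin m, ∫ w, (lam * L D p w - c * ind (p w (s i))) ∂Q'
        = lam * (∫ w, L D p w ∂Q') - c * ∫ w, ind (p w (s i)) ∂Q' := by
      intro i
      rw [integral_sub (hLint.const_mul lam) ((hiint (s i)).const_mul c),
        integral_const_mul, integral_const_mul]
    simp_rw [e2]
    rw [Finset.sum_sub_distrib, Finset.sum_const, ← Finset.mul_sum]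
    simp only [nsmul_eq_mul, Finset.card_univ, Fintype.card_fin]
    ring
  rw [hFval] at hdv
  linarith

end Det

section ProdKL

variable {W : Type*} [MeasurableSpace W] (Q pr : Measure W)
  [IsProbabilityMeasure Q] [IsProbabilityMeasure pr]

lemma prod_withDensity_rnDeriv (hac : Q ≪ pr) :
    (pr.prod pr).withDensity (fun w => Q.rnDeriv pr w.1 * Q.rnDeriv pr w.2) = Q.prod Q := by
  set r := Q.rnDeriv pr with hrdef
  have hrmeas : Measurable r := Measure.measurable_rnDeriv _ _
  have hQ : pr.withDensity r = Q := Measure.withDensity_rnDeriv_eq _ _ hac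
  symm
  apply Measure.prod_eq
  intro s t hs ht
  rw [withDensity_apply _ (hs.prod ht), ← Measure.prod_restrict s t,
    lintegral_prod_mul hrmeas.aemeasurable hrmeas.aemeasurable,
    ← withDensity_apply _ hs, ← withDensity_apply _ ht, hQ]

lemma llr_prod_facts (hac : Q ≪ pr) (hint : Integrable (llr Q pr) Q) :
    Integrable (llr (Q.prod Q) (pr.prod pr)) (Q.prod Q) ∧
    ∫ w, llr (Q.prod Q) (pr.prod pr) w ∂(Q.prod Q) = 2 * ∫ h, llr Q pr h ∂Q := by
  set r := Q.rnDeriv pr with hrdef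
  have hrmeas : Measurable r := Measure.measurable_rnDeriv _ _
  have hac2 : Q.prod Q ≪ pr.prod pr := hac.prod hac
  have hrn : (Q.prod Q).rnDeriv (pr.prod pr) =ᵐ[pr.prod pr] fun w => r w.1 * r w.2 := by
    have h := Measure.rnDeriv_withDensity (pr.prod pr)
      (f := fun w : W × W => r w.1 * r w.2)
      (by exact (hrmeas.comp measurable_fst).mul (hrmeas.comp measurable_snd))
    rw [hrdef] at h
    rw [prod_withDensity_rnDeriv Q pr hac] at h
    rw [← hrdef] at h
    exact h
  have hrnQ : (Q.prod Q).rnDeriv (pr.prod pr) =ᵐ[Q.prod Q] fun w => r w.1 * r w.2 :=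
    hac2.ae_le hrn
  have hS : ∀ᵐ h ∂Q, 0 < r h ∧ r h < ∞ :=
    (Measure.rnDeriv_pos hac).and (hac.ae_le (Measure.rnDeriv_lt_top Q pr))
  have hSmeas : MeasurableSet {h : W | 0 < r h ∧ r h < ∞} :=
    hrmeas measurableSet_Ioo
  have hmapfst : (Q.prod Q).map Prod.fst = Q := by
    rw [Measure.map_fst_prod]; simp
  have hmapsnd : (Q.prod Q).map Prod.snd = Q := by
    rw [Measure.map_snd_prod]; simp
  have hfst : ∀ᵐ w ∂(Q.prod Q), 0 < r w.1 ∧ r w.1 < ∞ :=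
    (ae_map_iff measurable_fst.aemeasurable hSmeas).mp (by rw [hmapfst]; exact hS)
  have hsnd : ∀ᵐ w ∂(Q.prod Q), 0 < r w.2 ∧ r w.2 < ∞ :=
    (ae_map_iff measurable_snd.aemeasurable hSmeas).mp (by rw [hmapsnd]; exact hS)
  have hlleq : llr (Q.prod Q) (pr.prod pr) =ᵐ[Q.prod Q]
      fun w => llr Q pr w.1 + llr Q pr w.2 := by
    filter_upwards [hrnQ, hfst, hsnd] with w hw h1 h2
    have ht1 : ((r w.1).toReal) ≠ 0 := (ENNReal.toReal_pos h1.1.ne' h1.2.ne).ne'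
    have ht2 : ((r w.2).toReal) ≠ 0 := (ENNReal.toReal_pos h2.1.ne' h2.2.ne).ne'
    show Real.log ((Q.prod Q).rnDeriv (pr.prod pr) w).toReal = _
    rw [hw, ENNReal.toReal_mul, Real.log_mul ht1 ht2]
    rfl
  have h1i : Integrable (llr Q pr ∘ Prod.fst) (Q.prod Q) := by
    apply (integrable_map_measure (stronglyMeasurable_llr Q pr).aestronglyMeasurable
      measurable_fst.aemeasurable).mp
    rw [hmapfst]; exact hint
  have h2i : Integrable (llr Q pr ∘ Prod.snd) (Q.prod Q) := by
    apply (integrable_map_measure (stronglyMeasurable_llr Q pr).aestronglyMeasurable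
      measurable_snd.aemeasurable).mp
    rw [hmapsnd]; exact hint
  constructor
  · exact ((h1i.add h2i).congr hlleq.symm)
  · rw [integral_congr_ae hlleq]
    have e1 : ∫ w, (llr Q pr w.1 + llr Q pr w.2) ∂(Q.prod Q)
        = ∫ w, llr Q pr (Prod.fst w) ∂(Q.prod Q) + ∫ w, llr Q pr (Prod.snd w) ∂(Q.prod Q) :=
      integral_add h1i h2i
    rw [e1]
    have e2 : ∫ w, llr Q pr (Prod.fst w) ∂(Q.prod Q) = ∫ h, llr Q pr h ∂Q := by
      rw [← integral_map measurable_fst.aemeasurable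
        (stronglyMeasurable_llr Q pr).aestronglyMeasurable, hmapfst]
    have e3 : ∫ w, llr Q pr (Prod.snd w) ∂(Q.prod Q) = ∫ h, llr Q pr h ∂Q := by
      rw [← integral_map measurable_snd.aemeasurable
        (stronglyMeasurable_llr Q pr).aestronglyMeasurable, hmapsnd]
    rw [e2, e3]
    ring

end ProdKL

section Helpers

variable {Ω : Type*} [MeasurableSpace Ω] (Q : Measure Ω) [IsProbabilityMeasure Q]

lemma integral_ind_double_dis {a : Ω → Bool} (ha : Measurable a) (y : Bool) :
    ∫ h, ∫ h', ind (a h ≠ a h') ∂Q ∂Q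
      = 2 * (∫ h, ind (a h ≠ y) ∂Q) * (1 - ∫ h, ind (a h ≠ y) ∂Q) := by
  set q := ∫ h, ind (a h ≠ y) ∂Q with hq
  have hmeas : Measurable fun h => ind (a h ≠ y) :=
    measurable_ind (measurableSet_ne_bool ha measurable_const)
  have hint : Integrable (fun h => ind (a h ≠ y)) Q :=
    integrable_of_bdd hmeas.aestronglyMeasurable (fun h => abs_ind_le_one _)
  have hptw : ∀ h h', ind (a h ≠ a h')
      = ind (a h ≠ y) + ind (a h' ≠ y) - 2 * (ind (a h ≠ y) * ind (a h' ≠ y)) := by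
    intro h h'
    cases hah : a h <;> cases hah' : a h' <;> cases y <;> simp [ind] <;> norm_num
  have hinner : ∀ h, ∫ h', ind (a h ≠ a h') ∂Q
      = ind (a h ≠ y) + (1 - 2 * ind (a h ≠ y)) * q := by
    intro h
    have e1 : (fun h' => ind (a h ≠ a h'))
        = fun h' => ind (a h ≠ y) + (1 - 2 * ind (a h ≠ y)) * ind (a h' ≠ y) :=
      funext fun h' => by rw [hptw h h']; ring
    rw [e1, integral_add (integrable_const _) (hint.const_mul _), integral_const,
      integral_const_mul]
    simp only [probReal_univ, smul_eq_mul, one_mul]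
    rfl
  have e2 : (fun h => ∫ h', ind (a h ≠ a h') ∂Q)
      = fun h => q + (1 - 2 * q) * ind (a h ≠ y) := funext fun h => by rw [hinner h]; ring
  rw [e2, integral_add (integrable_const _) (hint.const_mul _), integral_const,
    integral_const_mul]
  simp only [probReal_univ, measure_univ, ENNReal.toReal_one, smul_eq_mul, one_mul]
  ring

lemma integral_ind_double_joint {P : Ω → Prop} (hP : MeasurableSet {h | P h}) :
    ∫ h, ∫ h', ind (P h ∧ P h') ∂Q ∂Q = (∫ h, ind (P h) ∂Q) ^ 2 := by
  set q := ∫ h, ind (P h) ∂Q with hq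
  have hmeas : Measurable fun h => ind (P h) := measurable_ind hP
  have hint : Integrable (fun h => ind (P h)) Q :=
    integrable_of_bdd hmeas.aestronglyMeasurable (fun h => abs_ind_le_one _)
  have hptw : ∀ h h', ind (P h ∧ P h') = ind (P h) * ind (P h') := by
    intro h h'
    by_cases h1 : P h <;> by_cases h2 : P h' <;> simp [ind, h1, h2]
  have hinner : ∀ h, ∫ h', ind (P h ∧ P h') ∂Q = ind (P h) * q := by
    intro h
    rw [show (fun h' => ind (P h ∧ P h')) = fun h' => ind (P h) * ind (P h')
      from funext fun h' => hptw h h']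
    rw [integral_const_mul]
  rw [show (fun h => ∫ h', ind (P h ∧ P h') ∂Q) = fun h => ind (P h) * q
    from funext hinner]
  rw [integral_mul_const]
  ring

/-- split an integral over a product of two copies of `Q` into iterated integrals -/
lemma integral_prod_ind {P : Ω × Ω → Prop} (hP : MeasurableSet {w | P w}) :
    ∫ w, ind (P w) ∂(Q.prod Q) = ∫ h, ∫ h', ind (P (h, h')) ∂Q ∂Q :=
  integral_prod _ (integrable_of_bdd (measurable_ind hP).aestronglyMeasurable
    (fun _ => abs_ind_le_one _))

/-- swap the order of integration for bounded indicator integrands -/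
lemma integral_swap_ind {Z W : Type*} [MeasurableSpace Z] [MeasurableSpace W]
    (μ : Measure W) [IsProbabilityMeasure μ] (ν : Measure Z) [IsProbabilityMeasure ν]
    {p : W → Z → Prop} (hp : MeasurableSet {q : W × Z | p q.1 q.2}) :
    ∫ w, ∫ z, ind (p w z) ∂ν ∂μ = ∫ z, ∫ w, ind (p w z) ∂μ ∂ν := by
  apply integral_integral_swap
  exact integrable_of_bdd (measurable_ind hp).aestronglyMeasurable
    (fun q => abs_ind_le_one _)

end Helpers

section MainDet

variable {X : Type*} [MeasurableSpace X] {Ω : Type*} [MeasurableSpace Ω]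
    (ev : Ω → X → Bool) (hev : Measurable (Function.uncurry ev))
    (PS PT : Measure (X × Bool)) [IsProbabilityMeasure PS] [IsProbabilityMeasure PT]
    (A : Set (X × Bool)) (hA : MeasurableSet A) (hSA : PS Aᶜ = 0)
    (ρ : X × Bool → ℝ≥0∞) (hρ : Measurable ρ)
    (hdens : PT.restrict A = PS.withDensity ρ)
    (pr : Measure Ω) [IsProbabilityMeasure pr]
    (ms mt : ℕ) (b c : ℝ) (hb : 0 < b) (hc : 0 < c)
    (δ : ℝ) (hδ0 : 0 < δ) (hδ1 : δ ≤ 1)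

include hev hA hSA hρ hdens hb hc hδ0 hδ1 in
theorem main_det
    (sv : Fin ms → X × Bool) (tv : Fin mt → X)
    (hSgood : (∫⁻ w, ENNReal.ofReal (Real.exp (F PS
        (fun w (z : X × Bool) => ev w.1 z.1 ≠ z.2 ∧ ev w.2 z.1 ≠ z.2) b ms sv w))
        ∂(pr.prod pr)) ≤ ENNReal.ofReal (1/(δ/2)))
    (hTgood : (∫⁻ w, ENNReal.ofReal (Real.exp (F (PT.map Prod.fst)
        (fun w (x : X) => ev w.1 x ≠ ev w.2 x) c mt tv w))
        ∂(pr.prod pr)) ≤ ENNReal.ofReal (1/(δ/2)))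
    (Q : Measure Ω) (hQ : IsProbabilityMeasure Q) :
    ENNReal.ofReal (∫ z, ∫ h, (if ev h z.1 ≠ z.2 then (1 : ℝ) else 0) ∂Q ∂PT)
      ≤ ENNReal.ofReal (c / (1 - Real.exp (-c)))
          * ENNReal.ofReal ((1 / 2) * ((1 / (mt : ℝ)) * ∑ i : Fin mt, ∫ h, ∫ h',
              (if ev h (tv i) ≠ ev h' (tv i) then (1 : ℝ) else 0) ∂Q ∂Q))
        + (ENNReal.ofReal (b / (1 - Real.exp (-b))) * essSup ρ PS)
          * ENNReal.ofReal ((1 / (ms : ℝ)) * ∑ i : Fin ms, ∫ h, ∫ h',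
              (if ev h (sv i).1 ≠ (sv i).2 ∧ ev h' (sv i).1 ≠ (sv i).2
                then (1 : ℝ) else 0) ∂Q ∂Q)
        + ENNReal.ofReal ((PT Aᶜ).toReal *
            ⨆ h : Ω, ∫ z, (if ev h z.1 ≠ z.2 then (1 : ℝ) else 0) ∂(PT[|Aᶜ]))
        + (ENNReal.ofReal (c / (1 - Real.exp (-c))) / ENNReal.ofReal ((mt : ℝ) * c)
            + (ENNReal.ofReal (b / (1 - Real.exp (-b))) * essSup ρ PS)
                / ENNReal.ofReal ((ms : ℝ) * b))
          * (2 * klDivergence Q pr + ENNReal.ofReal (Real.log (2 / δ))) := by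
  haveI := hQ
  simp only [ind_eq]
  -- basic positivity
  have hlamc0 : 0 < 1 - Real.exp (-c) := by
    have : Real.exp (-c) < 1 := Real.exp_lt_one_iff.mpr (by linarith)
    linarith
  have hlamb0 : 0 < 1 - Real.exp (-b) := by
    have : Real.exp (-b) < 1 := Real.exp_lt_one_iff.mpr (by linarith)
    linarith
  have hc' : 0 < c / (1 - Real.exp (-c)) := div_pos hc hlamc0
  have hb' : 0 < b / (1 - Real.exp (-b)) := div_pos hb hlamb0
  have hLgpos : 0 < Real.log (2/δ) := Real.log_pos (by rw [lt_div_iff₀ hδ0]; linarith)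
  have hGne : 2 * klDivergence Q pr + ENNReal.ofReal (Real.log (2/δ)) ≠ 0 := by
    intro hzero
    have h1 : ENNReal.ofReal (Real.log (2/δ)) > 0 := ENNReal.ofReal_pos.2 hLgpos
    have := le_add_self.trans_eq hzero
    exact absurd (le_antisymm this zero_le) h1.ne'
  -- shorthand for the top branch
  have topcase : ∀ {x A1 A2 A3 A4 : ℝ≥0∞}, A4 = ⊤ → x ≤ A1 + A2 + A3 + A4 := by
    intro x A1 A2 A3 A4 h4
    rw [h4, add_top]
    exact le_top
  by_cases hKLtop : klDivergence Q pr = ⊤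
  · apply topcase
    rw [hKLtop]
    rw [ENNReal.mul_top (by norm_num : (2:ℝ≥0∞) ≠ 0), top_add]
    apply ENNReal.mul_top
    intro hczero
    have h1 : 0 < ENNReal.ofReal (c / (1 - Real.exp (-c))) / ENNReal.ofReal ((mt : ℝ) * c) :=
      ENNReal.div_pos (ENNReal.ofReal_pos.2 hc').ne' ENNReal.ofReal_ne_top
    exact absurd (le_antisymm (hczero ▸ le_self_add) zero_le) h1.ne'
  by_cases hβtop : essSup ρ PS = ⊤
  · apply topcase
    have hcoef : ENNReal.ofReal (c / (1 - Real.exp (-c))) / ENNReal.ofReal ((mt : ℝ) * c)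
        + (ENNReal.ofReal (b / (1 - Real.exp (-b))) * essSup ρ PS)
            / ENNReal.ofReal ((ms : ℝ) * b) = ⊤ := by
      rw [hβtop, ENNReal.mul_top (ENNReal.ofReal_pos.2 hb').ne',
        ENNReal.top_div_of_ne_top ENNReal.ofReal_ne_top, add_top]
    rw [hcoef]
    exact ENNReal.top_mul hGne
  by_cases hmt : mt = 0
  · apply topcase
    have h1 : ENNReal.ofReal ((mt : ℝ) * c) = 0 := by simp [hmt]
    rw [h1, ENNReal.div_zero (ENNReal.ofReal_pos.2 hc').ne', top_add]
    exact ENNReal.top_mul hGne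
  by_cases hcase : essSup ρ PS ≠ 0 ∧ ms = 0
  · apply topcase
    have h1 : ENNReal.ofReal ((ms : ℝ) * b) = 0 := by simp [hcase.2]
    have h2 : ENNReal.ofReal (b / (1 - Real.exp (-b))) * essSup ρ PS ≠ 0 :=
      mul_ne_zero (ENNReal.ofReal_pos.2 hb').ne' hcase.1
    rw [h1, ENNReal.div_zero h2, add_top]
    exact ENNReal.top_mul hGne
  push_neg at hcase
  -- ===================== main case =====================
  -- extract KL data
  have hcondKL : Q ≪ pr ∧ Integrable (llr Q pr) Q := by
    by_contra hcon
    exact hKLtop (by rw [klDivergence, if_neg hcon])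
  obtain ⟨hacQ, hllrQ⟩ := hcondKL
  have hKLval : klDivergence Q pr = ENNReal.ofReal (∫ h, llr Q pr h ∂Q) := by
    rw [klDivergence, if_pos ⟨hacQ, hllrQ⟩]
  have hKLr0 : 0 ≤ ∫ h, llr Q pr h ∂Q := integral_llr_nonneg hacQ hllrQ
  obtain ⟨hint2, hKL2⟩ := llr_prod_facts Q pr hacQ hllrQ
  have hac2 : Q.prod Q ≪ pr.prod pr := hacQ.prod hacQ
  haveI hDTprob : IsProbabilityMeasure (PT.map (Prod.fst : X × Bool → X)) :=
    Measure.isProbabilityMeasure_map measurable_fst.aemeasurable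
  have hδ2 : 0 < δ/2 := by linarith
  -- fold the two loss predicates
  set pTfun : (Ω × Ω) → X → Prop := fun w x => ev w.1 x ≠ ev w.2 x with hpTfun
  set pSfun : (Ω × Ω) → X × Bool → Prop :=
    fun w z => ev w.1 z.1 ≠ z.2 ∧ ev w.2 z.1 ≠ z.2 with hpSfun
  -- measurability of the loss sets
  have hpTm : MeasurableSet {q : (Ω × Ω) × X | pTfun q.1 q.2} := by
    rw [hpTfun]
    exact measurableSet_ne_bool
      (hev.comp ((measurable_fst.comp measurable_fst).prodMk measurable_snd))
      (hev.comp ((measurable_snd.comp measurable_fst).prodMk measurable_snd))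
  have hpSm : MeasurableSet {q : (Ω × Ω) × (X × Bool) | pSfun q.1 q.2} := by
    rw [hpSfun]
    have h1 : MeasurableSet {q : (Ω × Ω) × (X × Bool) | ev q.1.1 q.2.1 ≠ q.2.2} :=
      measurableSet_ne_bool
        (hev.comp ((measurable_fst.comp measurable_fst).prodMk
          (measurable_fst.comp measurable_snd)))
        (measurable_snd.comp measurable_snd)
    have h2 : MeasurableSet {q : (Ω × Ω) × (X × Bool) | ev q.1.2 q.2.1 ≠ q.2.2} :=
      measurableSet_ne_bool
        (hev.comp ((measurable_snd.comp measurable_fst).prodMk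
          (measurable_fst.comp measurable_snd)))
        (measurable_snd.comp measurable_snd)
    exact h1.inter h2
  -- PAC-Bayes bounds on the two samples
  have hTB := det_core (PT.map Prod.fst) (pr.prod pr) pTfun c mt hpTm hc hδ2 tv hTgood
    (Q.prod Q) hac2 hint2
  have hSB := det_core PS (pr.prod pr) pSfun b ms hpSm hb hδ2 sv hSgood
    (Q.prod Q) hac2 hint2
  rw [hKL2] at hTB hSB
  have hlogeq : Real.log (1/(δ/2)) = Real.log (2/δ) := by rw [one_div_div]
  rw [hlogeq] at hTB hSB
  -- the Gibbs error function
  set pfun : X × Bool → ℝ := fun z => ∫ h, ind (ev h z.1 ≠ z.2) ∂Q with hpfundef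
  have hpev : ∀ x : X, Measurable fun h : Ω => ev h x := fun x =>
    hev.comp (measurable_id.prodMk measurable_const)
  have hindzm : MeasurableSet {q : (X × Bool) × Ω | ev q.2 q.1.1 ≠ q.1.2} :=
    measurableSet_ne_bool
      (hev.comp (measurable_snd.prodMk (measurable_fst.comp measurable_fst)))
      (measurable_snd.comp measurable_fst)
  have hpfun_meas : Measurable pfun := by
    rw [hpfundef]
    exact ((measurable_ind hindzm).stronglyMeasurable.integral_prod_right').measurable
  have hpfun0 : ∀ z, 0 ≤ pfun z := fun z => integral_nonneg fun h => ind_nonneg _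
  have hQev_int : ∀ z : X × Bool, Integrable (fun h => ind (ev h z.1 ≠ z.2)) Q := fun z =>
    integrable_of_bdd ((measurable_ind (measurableSet_ne_bool (hpev z.1)
      measurable_const)).aestronglyMeasurable) (fun h => abs_ind_le_one _)
  have hpfun1 : ∀ z, pfun z ≤ 1 := fun z => by
    calc pfun z ≤ ∫ _h, (1:ℝ) ∂Q := integral_mono (hQev_int z) (integrable_const 1)
          (fun h => ind_le_one _)
      _ = 1 := by simp
  -- conversion of the empirical sums to iterated integrals
  have hDis : ∀ i : Fin mt, ∫ w, ind (pTfun w (tv i)) ∂(Q.prod Q)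
      = ∫ h, ∫ h', ind (ev h (tv i) ≠ ev h' (tv i)) ∂Q ∂Q := fun i =>
    integral_prod_ind Q (P := fun w : Ω × Ω => pTfun w (tv i))
      (measurable_prodMk_right (m := inferInstance) hpTm)
  have hJnt : ∀ i : Fin ms, ∫ w, ind (pSfun w (sv i)) ∂(Q.prod Q)
      = ∫ h, ∫ h', ind (ev h (sv i).1 ≠ (sv i).2 ∧ ev h' (sv i).1 ≠ (sv i).2) ∂Q ∂Q :=
    fun i => integral_prod_ind Q (P := fun w : Ω × Ω => pSfun w (sv i))
      (measurable_prodMk_right (m := inferInstance) hpSm)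
  -- conversion of the true losses
  have hLT : ∫ w, L (PT.map Prod.fst) pTfun w ∂(Q.prod Q)
      = ∫ z, 2 * pfun z * (1 - pfun z) ∂PT := by
    have h1 : ∫ w, L (PT.map Prod.fst) pTfun w ∂(Q.prod Q)
        = ∫ x, ∫ w, ind (pTfun w x) ∂(Q.prod Q) ∂(PT.map Prod.fst) :=
      integral_swap_ind (Q.prod Q) (PT.map Prod.fst) (p := pTfun) hpTm
    have hGm : Measurable fun x : X => ∫ w, ind (pTfun w x) ∂(Q.prod Q) :=
      ((measurable_ind (measurable_swap hpTm)).stronglyMeasurable.integral_prod_right').measurable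
    rw [h1, integral_map measurable_fst.aemeasurable hGm.aestronglyMeasurable]
    apply integral_congr_ae (ae_of_all _ fun z => ?_)
    rw [integral_prod_ind Q (P := fun w : Ω × Ω => pTfun w z.1)
      (measurable_prodMk_right (m := inferInstance) hpTm)]
    exact integral_ind_double_dis Q (hpev z.1) z.2
  have hLS : ∫ w, L PS pSfun w ∂(Q.prod Q) = ∫ z, pfun z ^ 2 ∂PS := by
    have h1 : ∫ w, L PS pSfun w ∂(Q.prod Q)
        = ∫ z, ∫ w, ind (pSfun w z) ∂(Q.prod Q) ∂PS :=
      integral_swap_ind (Q.prod Q) PS (p := pSfun) hpSm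
    rw [h1]
    apply integral_congr_ae (ae_of_all _ fun z => ?_)
    rw [integral_prod_ind Q (P := fun w : Ω × Ω => pSfun w z)
      (measurable_prodMk_right (m := inferInstance) hpSm)]
    exact integral_ind_double_joint Q (P := fun h => ev h z.1 ≠ z.2)
      (measurableSet_ne_bool (hpev z.1) measurable_const)
  rw [hLT] at hTB
  rw [hLS] at hSB
  -- decomposition of the Gibbs risk
  have hpfun_int_PT : Integrable pfun PT :=
    integrable_of_bdd hpfun_meas.aestronglyMeasurable
      (C := 1) (fun z => abs_le.2 ⟨by linarith [hpfun0 z], hpfun1 z⟩)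
  have hpfun2_int_PT : Integrable (fun z => pfun z ^ 2) PT :=
    integrable_of_bdd ((hpfun_meas.pow_const 2).aestronglyMeasurable)
      (C := 1) (fun z => by rw [abs_of_nonneg (sq_nonneg _)]; nlinarith [hpfun0 z, hpfun1 z])
  have hdis_int : Integrable (fun z => 2 * pfun z * (1 - pfun z)) PT :=
    integrable_of_bdd
      (((hpfun_meas.const_mul 2).mul (measurable_const.sub hpfun_meas)).aestronglyMeasurable)
      (C := 2) (fun z => abs_le.2 ⟨by nlinarith [hpfun0 z, hpfun1 z],
        by nlinarith [hpfun0 z, hpfun1 z]⟩)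
  have hRdecomp : ∫ z, pfun z ∂PT
      = (1/2) * ∫ z, 2 * pfun z * (1 - pfun z) ∂PT + ∫ z, pfun z ^ 2 ∂PT := by
    rw [← integral_const_mul, ← integral_add (hdis_int.const_mul _) hpfun2_int_PT]
    exact integral_congr_ae (ae_of_all _ fun z => by ring)
  have hsplitA : ∫ z in A, pfun z ^ 2 ∂PT + ∫ z in Aᶜ, pfun z ^ 2 ∂PT
      = ∫ z, pfun z ^ 2 ∂PT := integral_add_compl hA hpfun2_int_PT
  -- bound on the A part via the density
  have hAbound : ∫ z in A, pfun z ^ 2 ∂PT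
      ≤ (essSup ρ PS).toReal * ∫ z, pfun z ^ 2 ∂PS := by
    have h1 : ∫ z in A, pfun z ^ 2 ∂PT = ∫ z, pfun z ^ 2 ∂(PS.withDensity ρ) := by
      rw [hdens]
    haveI hfinwd : IsFiniteMeasure (PS.withDensity ρ) := by
      rw [← hdens]; infer_instance
    have hsqmeas : Measurable fun z => ENNReal.ofReal (pfun z ^ 2) :=
      ENNReal.measurable_ofReal.comp (hpfun_meas.pow_const 2)
    have h2 : ∫ z, pfun z ^ 2 ∂(PS.withDensity ρ)
        = (∫⁻ z, ENNReal.ofReal (pfun z ^ 2) ∂(PS.withDensity ρ)).toReal := by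
      rw [integral_eq_lintegral_of_nonneg_ae (ae_of_all _ fun z => sq_nonneg _)
        ((hpfun_meas.pow_const 2).aestronglyMeasurable)]
    have h3 : ∫⁻ z, ENNReal.ofReal (pfun z ^ 2) ∂(PS.withDensity ρ)
        = ∫⁻ z, ρ z * ENNReal.ofReal (pfun z ^ 2) ∂PS :=
      lintegral_withDensity_eq_lintegral_mul _ hρ hsqmeas
    have h4 : ∫⁻ z, ρ z * ENNReal.ofReal (pfun z ^ 2) ∂PS
        ≤ essSup ρ PS * ∫⁻ z, ENNReal.ofReal (pfun z ^ 2) ∂PS := by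
      rw [← lintegral_const_mul _ hsqmeas]
      apply lintegral_mono_ae
      filter_upwards [ENNReal.ae_le_essSup (μ := PS) ρ] with z hz
      exact mul_le_mul_left hz _
    have h5 : ∫⁻ z, ENNReal.ofReal (pfun z ^ 2) ∂PS ≤ 1 := by
      calc ∫⁻ z, ENNReal.ofReal (pfun z ^ 2) ∂PS ≤ ∫⁻ _z, 1 ∂PS := by
            apply lintegral_mono
            intro z
            rw [show (1:ℝ≥0∞) = ENNReal.ofReal 1 by simp]
            exact ENNReal.ofReal_le_ofReal (by nlinarith [hpfun0 z, hpfun1 z])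
        _ = 1 := by simp
    have h6 : (∫⁻ z, ENNReal.ofReal (pfun z ^ 2) ∂PS).toReal = ∫ z, pfun z ^ 2 ∂PS := by
      rw [integral_eq_lintegral_of_nonneg_ae (ae_of_all _ fun z => sq_nonneg _)
        ((hpfun_meas.pow_const 2).aestronglyMeasurable)]
    rw [h1, h2, h3]
    calc (∫⁻ z, ρ z * ENNReal.ofReal (pfun z ^ 2) ∂PS).toReal
        ≤ (essSup ρ PS * ∫⁻ z, ENNReal.ofReal (pfun z ^ 2) ∂PS).toReal := by
          apply ENNReal.toReal_mono _ h4
          exact ENNReal.mul_ne_top hβtop (h5.trans_lt ENNReal.one_lt_top).ne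
      _ = (essSup ρ PS).toReal * (∫⁻ z, ENNReal.ofReal (pfun z ^ 2) ∂PS).toReal :=
          ENNReal.toReal_mul
      _ = (essSup ρ PS).toReal * ∫ z, pfun z ^ 2 ∂PS := by rw [h6]
  -- bound on the complement part
  set Ssup := ⨆ h : Ω, ∫ z, ind (ev h z.1 ≠ z.2) ∂(PT[|Aᶜ]) with hSsupdef
  have hcompl : ∫ z in Aᶜ, pfun z ^ 2 ∂PT ≤ (PT Aᶜ).toReal * Ssup := by
    by_cases hAc0 : PT Aᶜ = 0
    · have hz : PT.restrict Aᶜ = 0 := Measure.restrict_eq_zero.mpr hAc0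
      rw [show ∫ z in Aᶜ, pfun z ^ 2 ∂PT = 0 by rw [hz, integral_zero_measure], hAc0]
      simp
    · haveI hcprob : IsProbabilityMeasure (PT[|Aᶜ]) := cond_isProbabilityMeasure hAc0
      have hsq_le : ∫ z in Aᶜ, pfun z ^ 2 ∂PT ≤ ∫ z in Aᶜ, pfun z ∂PT :=
        integral_mono hpfun2_int_PT.restrict hpfun_int_PT.restrict
          (fun z => by nlinarith [hpfun0 z, hpfun1 z])
      have hPTne : (PT Aᶜ).toReal ≠ 0 :=
        (ENNReal.toReal_pos hAc0 (measure_ne_top _ _)).ne'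
      have hrsplit : ∫ z in Aᶜ, pfun z ∂PT = (PT Aᶜ).toReal * ∫ z, pfun z ∂(PT[|Aᶜ]) := by
        rw [show PT[|Aᶜ] = (PT Aᶜ)⁻¹ • PT.restrict Aᶜ from rfl, integral_smul_measure,
          ENNReal.toReal_inv, smul_eq_mul, ← mul_assoc,
          mul_inv_cancel₀ hPTne, one_mul]
      have hcondint : ∀ h : Ω, Integrable (fun z => ind (ev h z.1 ≠ z.2)) (PT[|Aᶜ]) :=
        fun h => integrable_of_bdd ((measurable_ind (measurableSet_ne_bool
          ((hev.comp (measurable_const.prodMk measurable_fst)))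
          measurable_snd)).aestronglyMeasurable) (fun z => abs_ind_le_one _)
      have hcond1 : ∀ h : Ω, ∫ z, ind (ev h z.1 ≠ z.2) ∂(PT[|Aᶜ]) ≤ 1 := fun h => by
        calc ∫ z, ind (ev h z.1 ≠ z.2) ∂(PT[|Aᶜ]) ≤ ∫ _z, (1:ℝ) ∂(PT[|Aᶜ]) :=
              integral_mono (hcondint h) (integrable_const 1) (fun z => ind_le_one _)
          _ = 1 := by simp
      have hcondle : ∫ z, pfun z ∂(PT[|Aᶜ]) ≤ Ssup := by
        have hswap2 : ∫ z, pfun z ∂(PT[|Aᶜ])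
            = ∫ h, ∫ z, ind (ev h z.1 ≠ z.2) ∂(PT[|Aᶜ]) ∂Q :=
          integral_swap_ind (PT[|Aᶜ]) Q
            (p := fun (z : X × Bool) (h : Ω) => ev h z.1 ≠ z.2) hindzm
        rw [hswap2]
        have hbdd : BddAbove (Set.range fun h : Ω =>
            ∫ z, ind (ev h z.1 ≠ z.2) ∂(PT[|Aᶜ])) := by
          refine ⟨1, ?_⟩
          rintro x ⟨h, rfl⟩
          exact hcond1 h
        have hintc : Integrable (fun h : Ω =>
            ∫ z, ind (ev h z.1 ≠ z.2) ∂(PT[|Aᶜ])) Q := by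
          apply integrable_of_bdd (C := 1)
          · exact ((measurable_ind (measurable_swap hindzm)).stronglyMeasurable.integral_prod_right').measurable.aestronglyMeasurable
          · intro h
            rw [abs_of_nonneg (integral_nonneg fun z => ind_nonneg _)]
            exact hcond1 h
        calc ∫ h, ∫ z, ind (ev h z.1 ≠ z.2) ∂(PT[|Aᶜ]) ∂Q
            ≤ ∫ _h, Ssup ∂Q := integral_mono hintc (integrable_const _)
              (fun h => le_ciSup hbdd h)
          _ = Ssup := by simp
      calc ∫ z in Aᶜ, pfun z ^ 2 ∂PT ≤ ∫ z in Aᶜ, pfun z ∂PT := hsq_le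
        _ = (PT Aᶜ).toReal * ∫ z, pfun z ∂(PT[|Aᶜ]) := hrsplit
        _ ≤ (PT Aᶜ).toReal * Ssup :=
            mul_le_mul_of_nonneg_left hcondle ENNReal.toReal_nonneg
  -- real-valued abbreviations
  set KLr := ∫ h, llr Q pr h ∂Q with hKLrdef
  set Gr := 2 * KLr + Real.log (2/δ) with hGrdef
  have hGr0 : 0 ≤ Gr := by rw [hGrdef]; linarith
  set dhat := (1/(mt:ℝ)) * ∑ i : Fin mt, ∫ h, ∫ h',
    ind (ev h (tv i) ≠ ev h' (tv i)) ∂Q ∂Q with hdhatdef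
  set ehat := (1/(ms:ℝ)) * ∑ i : Fin ms, ∫ h, ∫ h',
    ind (ev h (sv i).1 ≠ (sv i).2 ∧ ev h' (sv i).1 ≠ (sv i).2) ∂Q ∂Q with hehatdef
  have hmtR : (0:ℝ) < mt := by exact_mod_cast Nat.pos_of_ne_zero hmt
  -- target bound after division
  have hDbound : ∫ z, 2 * pfun z * (1 - pfun z) ∂PT
      ≤ (c/(1 - Real.exp (-c))) * dhat + Gr / ((mt:ℝ) * (1 - Real.exp (-c))) := by
    have h0 : ∑ i : Fin mt, ∫ w, ind (pTfun w (tv i)) ∂(Q.prod Q) = (mt:ℝ) * dhat := by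
      rw [hdhatdef, ← mul_assoc, mul_one_div, div_self hmtR.ne', one_mul]
      exact Finset.sum_congr rfl fun i _ => hDis i
    rw [h0] at hTB
    have h2 : ∫ z, 2 * pfun z * (1 - pfun z) ∂PT
        = ((1 - Real.exp (-c)) * ((mt:ℝ) * ∫ z, 2 * pfun z * (1 - pfun z) ∂PT))
          / ((mt:ℝ) * (1 - Real.exp (-c))) := by
      field_simp
    rw [h2, div_le_iff₀ (by positivity)]
    calc (1 - Real.exp (-c)) * ((mt:ℝ) * ∫ z, 2 * pfun z * (1 - pfun z) ∂PT)
        ≤ c * ((mt:ℝ) * dhat) + Gr := hTB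
      _ = ((c/(1 - Real.exp (-c))) * dhat + Gr / ((mt:ℝ) * (1 - Real.exp (-c))))
          * ((mt:ℝ) * (1 - Real.exp (-c))) := by
          field_simp
  -- source bound after division, multiplied by β
  have hSbound : (essSup ρ PS).toReal * ∫ z, pfun z ^ 2 ∂PS
      ≤ (b/(1 - Real.exp (-b))) * (essSup ρ PS).toReal * ehat
        + ((b/(1 - Real.exp (-b))) * (essSup ρ PS).toReal / ((ms:ℝ) * b)) * Gr := by
    by_cases hms : ms = 0
    · have hβ0 : essSup ρ PS = 0 := by
        by_contra hββ
        exact (hcase hββ) hms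
      rw [hβ0]
      simp
    · have hmsR : (0:ℝ) < ms := by exact_mod_cast Nat.pos_of_ne_zero hms
      have h0 : ∑ i : Fin ms, ∫ w, ind (pSfun w (sv i)) ∂(Q.prod Q) = (ms:ℝ) * ehat := by
        rw [hehatdef, ← mul_assoc, mul_one_div, div_self hmsR.ne', one_mul]
        exact Finset.sum_congr rfl fun i _ => hJnt i
      rw [h0] at hSB
      have hE : ∫ z, pfun z ^ 2 ∂PS
          ≤ (b/(1 - Real.exp (-b))) * ehat + Gr / ((ms:ℝ) * (1 - Real.exp (-b))) := by
        have h2 : ∫ z, pfun z ^ 2 ∂PS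
            = ((1 - Real.exp (-b)) * ((ms:ℝ) * ∫ z, pfun z ^ 2 ∂PS))
              / ((ms:ℝ) * (1 - Real.exp (-b))) := by
          field_simp
        rw [h2, div_le_iff₀ (by positivity)]
        calc (1 - Real.exp (-b)) * ((ms:ℝ) * ∫ z, pfun z ^ 2 ∂PS)
            ≤ b * ((ms:ℝ) * ehat) + Gr := hSB
          _ = ((b/(1 - Real.exp (-b))) * ehat + Gr / ((ms:ℝ) * (1 - Real.exp (-b))))
              * ((ms:ℝ) * (1 - Real.exp (-b))) := by
              field_simp
      have hβr0 : (0:ℝ) ≤ (essSup ρ PS).toReal := ENNReal.toReal_nonneg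
      calc (essSup ρ PS).toReal * ∫ z, pfun z ^ 2 ∂PS
          ≤ (essSup ρ PS).toReal * ((b/(1 - Real.exp (-b))) * ehat
              + Gr / ((ms:ℝ) * (1 - Real.exp (-b)))) :=
            mul_le_mul_of_nonneg_left hE hβr0
        _ = (b/(1 - Real.exp (-b))) * (essSup ρ PS).toReal * ehat
              + ((b/(1 - Real.exp (-b))) * (essSup ρ PS).toReal / ((ms:ℝ) * b)) * Gr := by
            field_simp
  -- final real inequality
  have e2 : Gr / ((mt:ℝ) * (1 - Real.exp (-c)))
      = ((c/(1 - Real.exp (-c)))/((mt:ℝ)*c)) * Gr := by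
    field_simp
  have htcGr : 0 ≤ ((c/(1 - Real.exp (-c)))/((mt:ℝ)*c)) * Gr :=
    mul_nonneg (by positivity) hGr0
  have hfinal : ∫ z, pfun z ∂PT
      ≤ (c/(1 - Real.exp (-c))) * ((1/2) * dhat)
        + ((b/(1 - Real.exp (-b))) * (essSup ρ PS).toReal * ehat
        + ((PT Aᶜ).toReal * Ssup
        + ((c/(1 - Real.exp (-c)))/((mt:ℝ)*c)
            + (b/(1 - Real.exp (-b))) * (essSup ρ PS).toReal/((ms:ℝ)*b)) * Gr)) := by
    have h1 : ∫ z, pfun z ^ 2 ∂PT ≤ (essSup ρ PS).toReal * ∫ z, pfun z ^ 2 ∂PS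
        + (PT Aᶜ).toReal * Ssup := by
      rw [← hsplitA]
      exact add_le_add hAbound hcompl
    nlinarith [hRdecomp, hDbound, hSbound, h1, e2, htcGr]
  -- pass to ℝ≥0∞
  calc ENNReal.ofReal (∫ z, pfun z ∂PT)
      ≤ ENNReal.ofReal ((c/(1 - Real.exp (-c))) * ((1/2) * dhat)
        + ((b/(1 - Real.exp (-b))) * (essSup ρ PS).toReal * ehat
        + ((PT Aᶜ).toReal * Ssup
        + ((c/(1 - Real.exp (-c)))/((mt:ℝ)*c)
            + (b/(1 - Real.exp (-b))) * (essSup ρ PS).toReal/((ms:ℝ)*b)) * Gr))) :=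
        ENNReal.ofReal_le_ofReal hfinal
    _ ≤ ENNReal.ofReal ((c/(1 - Real.exp (-c))) * ((1/2) * dhat))
        + (ENNReal.ofReal ((b/(1 - Real.exp (-b))) * (essSup ρ PS).toReal * ehat)
        + (ENNReal.ofReal ((PT Aᶜ).toReal * Ssup)
        + ENNReal.ofReal (((c/(1 - Real.exp (-c)))/((mt:ℝ)*c)
            + (b/(1 - Real.exp (-b))) * (essSup ρ PS).toReal/((ms:ℝ)*b)) * Gr))) :=
        le_trans ENNReal.ofReal_add_le (add_le_add_right (le_trans ENNReal.ofReal_add_le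
          (add_le_add_right ENNReal.ofReal_add_le _)) _)
    _ = ENNReal.ofReal (c / (1 - Real.exp (-c))) * ENNReal.ofReal ((1/2) * dhat)
        + ((ENNReal.ofReal (b / (1 - Real.exp (-b))) * essSup ρ PS) * ENNReal.ofReal ehat
        + (ENNReal.ofReal ((PT Aᶜ).toReal * Ssup)
        + (ENNReal.ofReal (c / (1 - Real.exp (-c))) / ENNReal.ofReal ((mt : ℝ) * c)
            + (ENNReal.ofReal (b / (1 - Real.exp (-b))) * essSup ρ PS)
                / ENNReal.ofReal ((ms : ℝ) * b))
          * (2 * klDivergence Q pr + ENNReal.ofReal (Real.log (2 / δ))))) := by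
        congr 1
        · exact ENNReal.ofReal_mul hc'.le
        congr 1
        · rw [ENNReal.ofReal_mul (mul_nonneg hb'.le ENNReal.toReal_nonneg),
            ENNReal.ofReal_mul hb'.le, ENNReal.ofReal_toReal hβtop]
        congr 1
        rw [ENNReal.ofReal_mul (by positivity)]
        congr 1
        · rw [ENNReal.ofReal_add (by positivity) (by positivity)]
          congr 1
          · rw [ENNReal.ofReal_div_of_pos (by positivity)]
          · by_cases hms : ms = 0
            · have hβ0 : essSup ρ PS = 0 := by
                by_contra hββ
                exact (hcase hββ) hms
              rw [hβ0]
              simp [hms]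
            · have hmsR : (0:ℝ) < ms := by exact_mod_cast Nat.pos_of_ne_zero hms
              rw [ENNReal.ofReal_div_of_pos (by positivity),
                ENNReal.ofReal_mul hb'.le, ENNReal.ofReal_toReal hβtop]
        · rw [hKLval, hGrdef, ENNReal.ofReal_add (by linarith) hLgpos.le]
          congr 1
          rw [ENNReal.ofReal_mul (by norm_num : (0:ℝ) ≤ 2)]
          congr 1
          simp
    _ = _ := by ring

end MainDet

end PBDA

open PBDA in
theorem pac_bayes_domain_adaptation
    {X : Type*} [MeasurableSpace X] {Ω : Type*} [MeasurableSpace Ω]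
    (ev : Ω → X → Bool) (hev : Measurable (Function.uncurry ev))
    (PS PT : Measure (X × Bool)) [IsProbabilityMeasure PS] [IsProbabilityMeasure PT]
    (A : Set (X × Bool)) (hA : MeasurableSet A) (hSA : PS Aᶜ = 0)
    (ρ : X × Bool → ℝ≥0∞) (hρ : Measurable ρ)
    (hdens : PT.restrict A = PS.withDensity ρ)
    (pr : Measure Ω) [IsProbabilityMeasure pr]
    (ms mt : ℕ) (b c : ℝ) (hb : 0 < b) (hc : 0 < c)
    (δ : ℝ) (hδ0 : 0 < δ) (hδ1 : δ ≤ 1) :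
    -- b' = (b/(1-e^{-b})) β_∞  and  c' = c/(1-e^{-c})
    ENNReal.ofReal (1 - δ) ≤
      ((Measure.pi fun _ : Fin ms => PS).prod (Measure.pi fun _ : Fin mt => PT.map Prod.fst))
        {ST | ∀ Q : Measure Ω, IsProbabilityMeasure Q →
          -- R_{P_T}(G_Q) ≤ c'·(1/2)·d̂_T(Q) + b'·ê_S(Q) + η_{T∖S}
          --               + (c'/(m_t c) + b'/(m_s b)) (2 KL(Q‖π) + ln(2/δ))
          ENNReal.ofReal (∫ z, ∫ h, (if ev h z.1 ≠ z.2 then (1 : ℝ) else 0) ∂Q ∂PT)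
            ≤ ENNReal.ofReal (c / (1 - Real.exp (-c)))
                * ENNReal.ofReal ((1 / 2) * ((1 / (mt : ℝ)) * ∑ i : Fin mt, ∫ h, ∫ h',
                    (if ev h (ST.2 i) ≠ ev h' (ST.2 i) then (1 : ℝ) else 0) ∂Q ∂Q))
              + (ENNReal.ofReal (b / (1 - Real.exp (-b))) * essSup ρ PS)
                * ENNReal.ofReal ((1 / (ms : ℝ)) * ∑ i : Fin ms, ∫ h, ∫ h',
                    (if ev h (ST.1 i).1 ≠ (ST.1 i).2 ∧ ev h' (ST.1 i).1 ≠ (ST.1 i).2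
                      then (1 : ℝ) else 0) ∂Q ∂Q)
              + ENNReal.ofReal ((PT Aᶜ).toReal *
                  ⨆ h : Ω, ∫ z, (if ev h z.1 ≠ z.2 then (1 : ℝ) else 0) ∂(PT[|Aᶜ]))
              + (ENNReal.ofReal (c / (1 - Real.exp (-c))) / ENNReal.ofReal ((mt : ℝ) * c)
                  + (ENNReal.ofReal (b / (1 - Real.exp (-b))) * essSup ρ PS)
                      / ENNReal.ofReal ((ms : ℝ) * b))
                * (2 * klDivergence Q pr + ENNReal.ofReal (Real.log (2 / δ)))} := by

  classical
  haveI hDTprob : IsProbabilityMeasure (PT.map (Prod.fst : X × Bool → X)) :=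
    Measure.isProbabilityMeasure_map measurable_fst.aemeasurable
  have hpTm : MeasurableSet {q : (Ω × Ω) × X |
      (fun w (x : X) => ev w.1 x ≠ ev w.2 x) q.1 q.2} :=
    measurableSet_ne_bool
      (hev.comp ((measurable_fst.comp measurable_fst).prodMk measurable_snd))
      (hev.comp ((measurable_snd.comp measurable_fst).prodMk measurable_snd))
  have hpSm : MeasurableSet {q : (Ω × Ω) × (X × Bool) |
      (fun w (z : X × Bool) => ev w.1 z.1 ≠ z.2 ∧ ev w.2 z.1 ≠ z.2) q.1 q.2} := by
    have h1 : MeasurableSet {q : (Ω × Ω) × (X × Bool) | ev q.1.1 q.2.1 ≠ q.2.2} :=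
      measurableSet_ne_bool
        (hev.comp ((measurable_fst.comp measurable_fst).prodMk
          (measurable_fst.comp measurable_snd)))
        (measurable_snd.comp measurable_snd)
    have h2 : MeasurableSet {q : (Ω × Ω) × (X × Bool) | ev q.1.2 q.2.1 ≠ q.2.2} :=
      measurableSet_ne_bool
        (hev.comp ((measurable_snd.comp measurable_fst).prodMk
          (measurable_fst.comp measurable_snd)))
        (measurable_snd.comp measurable_snd)
    exact h1.inter h2
  have hδ2 : 0 < δ/2 := by linarith
  have hbadS := moment_markov PS (pr.prod pr)
    (fun w (z : X × Bool) => ev w.1 z.1 ≠ z.2 ∧ ev w.2 z.1 ≠ z.2) b ms hpSm hb hδ2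
  have hbadT := moment_markov (PT.map Prod.fst) (pr.prod pr)
    (fun w (x : X) => ev w.1 x ≠ ev w.2 x) c mt hpTm hc hδ2
  set badS := badSet PS (pr.prod pr)
    (fun w (z : X × Bool) => ev w.1 z.1 ≠ z.2 ∧ ev w.2 z.1 ≠ z.2) b ms (δ/2) with hbadSdef
  set badT := badSet (PT.map Prod.fst) (pr.prod pr)
    (fun w (x : X) => ev w.1 x ≠ ev w.2 x) c mt (δ/2) with hbadTdef
  have hsubset : (badSᶜ ×ˢ badTᶜ) ⊆ {ST : (Fin ms → X × Bool) × (Fin mt → X) |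
      ∀ Q : Measure Ω, IsProbabilityMeasure Q →
      ENNReal.ofReal (∫ z, ∫ h, (if ev h z.1 ≠ z.2 then (1 : ℝ) else 0) ∂Q ∂PT)
        ≤ ENNReal.ofReal (c / (1 - Real.exp (-c)))
            * ENNReal.ofReal ((1 / 2) * ((1 / (mt : ℝ)) * ∑ i : Fin mt, ∫ h, ∫ h',
                (if ev h (ST.2 i) ≠ ev h' (ST.2 i) then (1 : ℝ) else 0) ∂Q ∂Q))
          + (ENNReal.ofReal (b / (1 - Real.exp (-b))) * essSup ρ PS)
            * ENNReal.ofReal ((1 / (ms : ℝ)) * ∑ i : Fin ms, ∫ h, ∫ h',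
                (if ev h (ST.1 i).1 ≠ (ST.1 i).2 ∧ ev h' (ST.1 i).1 ≠ (ST.1 i).2
                  then (1 : ℝ) else 0) ∂Q ∂Q)
          + ENNReal.ofReal ((PT Aᶜ).toReal *
              ⨆ h : Ω, ∫ z, (if ev h z.1 ≠ z.2 then (1 : ℝ) else 0) ∂(PT[|Aᶜ]))
          + (ENNReal.ofReal (c / (1 - Real.exp (-c))) / ENNReal.ofReal ((mt : ℝ) * c)
              + (ENNReal.ofReal (b / (1 - Real.exp (-b))) * essSup ρ PS)
                  / ENNReal.ofReal ((ms : ℝ) * b))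
            * (2 * klDivergence Q pr + ENNReal.ofReal (Real.log (2 / δ)))} := by
    rintro ⟨sv, tv⟩ ⟨hs, ht⟩
    intro Q hQ
    have hSgood : (∫⁻ w, ENNReal.ofReal (Real.exp (F PS
        (fun w (z : X × Bool) => ev w.1 z.1 ≠ z.2 ∧ ev w.2 z.1 ≠ z.2) b ms sv w))
        ∂(pr.prod pr)) ≤ ENNReal.ofReal (1/(δ/2)) := not_lt.mp (by exact hs)
    have hTgood : (∫⁻ w, ENNReal.ofReal (Real.exp (F (PT.map Prod.fst)
        (fun w (x : X) => ev w.1 x ≠ ev w.2 x) c mt tv w))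
        ∂(pr.prod pr)) ≤ ENNReal.ofReal (1/(δ/2)) := not_lt.mp (by exact ht)
    exact main_det ev hev PS PT A hA hSA ρ hρ hdens pr ms mt b c hb hc δ hδ0 hδ1
      sv tv hSgood hTgood Q hQ
  refine le_trans ?_ (measure_mono hsubset)
  rw [Measure.prod_prod]
  have hS1 : ENNReal.ofReal (1 - δ/2) ≤ (Measure.pi fun _ : Fin ms => PS) badSᶜ := by
    rw [prob_compl_eq_one_sub (measurableSet_badSet PS (pr.prod pr) _ b ms hpSm (δ/2))]
    apply ENNReal.le_sub_of_add_le_right (measure_ne_top _ _)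
    calc ENNReal.ofReal (1 - δ/2) + (Measure.pi fun _ : Fin ms => PS) badS
        ≤ ENNReal.ofReal (1 - δ/2) + ENNReal.ofReal (δ/2) := add_le_add_right hbadS _
      _ = 1 := by
          rw [← ENNReal.ofReal_add (by linarith) (by linarith)]
          norm_num
  have hT1 : ENNReal.ofReal (1 - δ/2) ≤ (Measure.pi fun _ : Fin mt => PT.map Prod.fst) badTᶜ := by
    rw [prob_compl_eq_one_sub
      (measurableSet_badSet (PT.map Prod.fst) (pr.prod pr) _ c mt hpTm (δ/2))]
    apply ENNReal.le_sub_of_add_le_right (measure_ne_top _ _)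
    calc ENNReal.ofReal (1 - δ/2) + (Measure.pi fun _ : Fin mt => PT.map Prod.fst) badT
        ≤ ENNReal.ofReal (1 - δ/2) + ENNReal.ofReal (δ/2) := add_le_add_right hbadT _
      _ = 1 := by
          rw [← ENNReal.ofReal_add (by linarith) (by linarith)]
          norm_num
  calc ENNReal.ofReal (1 - δ) ≤ ENNReal.ofReal ((1 - δ/2) * (1 - δ/2)) := by
        apply ENNReal.ofReal_le_ofReal
        nlinarith
    _ = ENNReal.ofReal (1 - δ/2) * ENNReal.ofReal (1 - δ/2) :=
        ENNReal.ofReal_mul (by linarith)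
    _ ≤ (Measure.pi fun _ : Fin ms => PS) badSᶜ
          * (Measure.pi fun _ : Fin mt => PT.map Prod.fst) badTᶜ :=
        mul_le_mul' hS1 hT1
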